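/- arXiv:math/0106239 — 2 statements merged into one kernel-verified Lean document; each statement's English description precedes it below -/
import Mathlib

section
/- Let k be a field, A := k[w,x,z][[y]], B := k[w,x,1/x,z][[y]], φ : A → B the coefficientwise localization map, and P the ideal of A generated by the constant power series w and z. The quotient ring B/(P.map φ) is isomorphic as a ring to k[x,1/x][[y]], the power series ring in y over the Laurent polynomial ring k[x,1/x]. -/
/-- `A = k[w,x,z][[y]]`: power series in `y` over the polynomial ring `k[w,x,z]`,
with `w = X 0`, `x = X 1`, `z = X 2`. -/
abbrev A (k : Type*) [Field k] : Type _ := PowerSeries (MvPolynomial (Fin 3) k)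

/-- `B = k[w,x,1/x,z][[y]]`: power series in `y` over the localization of `k[w,x,z]`
away from `x`. -/
abbrev B (k : Type*) [Field k] : Type _ :=
  PowerSeries (Localization.Away (MvPolynomial.X 1 : MvPolynomial (Fin 3) k))

/-- The coefficientwise localization map `φ : A → B`. -/
noncomputable def φ (k : Type*) [Field k] : A k →+* B k :=
  PowerSeries.map (algebraMap (MvPolynomial (Fin 3) k)
    (Localization.Away (MvPolynomial.X 1 : MvPolynomial (Fin 3) k)))

/-- The ideal `P = (w, z)` of `A`, generated by the constant power series `w` and `z`. -/
noncomputable def P (k : Type*) [Field k] : Ideal (A k) :=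
  Ideal.span {PowerSeries.C (MvPolynomial.X 0 : MvPolynomial (Fin 3) k),
    PowerSeries.C (MvPolynomial.X 2 : MvPolynomial (Fin 3) k)}

open MvPolynomial

noncomputable section

variable (k : Type*) [Field k]

/-- evaluation w↦0, x↦T 1, z↦0 as an algebra hom. -/
def evA : MvPolynomial (Fin 3) k →ₐ[k] LaurentPolynomial k :=
  MvPolynomial.aeval fun i : Fin 3 => if i = 1 then LaurentPolynomial.T 1 else 0

/-- substitution w↦0, x↦x, z↦0. -/
def σA : MvPolynomial (Fin 3) k →ₐ[k] MvPolynomial (Fin 3) k :=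
  MvPolynomial.aeval fun i : Fin 3 => if i = 1 then X 1 else 0

def αA : MvPolynomial (Fin 3) k →ₐ[k] Polynomial k :=
  MvPolynomial.aeval fun i : Fin 3 => if i = 1 then Polynomial.X else 0

def βA : Polynomial k →ₐ[k] MvPolynomial (Fin 3) k := Polynomial.aeval (X 1)

lemma sub_sigma_mem (p : MvPolynomial (Fin 3) k) :
    p - σA k p ∈ Ideal.span {(X 0 : MvPolynomial (Fin 3) k), X 2} := by
  induction p using MvPolynomial.induction_on with
  | C a => simp [σA]
  | add p q hp hq => rw [map_add]; have := Ideal.add_mem _ hp hq; convert this using 1; ring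
  | mul_X p i hp =>
      rw [map_mul]
      by_cases h1 : i = 1
      · subst h1
        have hXi : σA k (X (1 : Fin 3)) = X 1 := by simp [σA]
        rw [hXi, show p * X 1 - σA k p * X 1 = (p - σA k p) * X 1 from by ring]
        exact Ideal.mul_mem_right _ _ hp
      · have hXi : σA k (X i) = 0 := by simp [σA, h1]
        rw [hXi, mul_zero, sub_zero]
        have hv : i = 0 ∨ i = 2 := by
          have h3 := i.isLt
          have h1' : i.val ≠ 1 := fun h => h1 (Fin.ext h)
          rcases Nat.lt_or_ge i.val 1 with h | h
          · left; exact Fin.ext (by omega)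
          · right; exact Fin.ext (by omega)
        refine Ideal.mul_mem_left _ p (Ideal.subset_span ?_)
        rcases hv with rfl | rfl <;> simp

lemma toLaurent_comp_alpha :
    (Polynomial.toLaurentAlg.comp (αA k) : MvPolynomial (Fin 3) k →ₐ[k] LaurentPolynomial k)
      = evA k := by
  apply MvPolynomial.algHom_ext
  intro i
  fin_cases i <;> simp [αA, evA, Polynomial.toLaurentAlg]

lemma alpha_comp_sigma : (αA k).comp (σA k) = αA k := by
  apply MvPolynomial.algHom_ext
  intro i
  fin_cases i <;> simp [αA, σA]

lemma beta_comp_alpha_eq_sigma : (βA k).comp (αA k) = σA k := by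
  apply MvPolynomial.algHom_ext
  intro i
  fin_cases i <;> simp [αA, σA, βA]

lemma ker_evA : RingHom.ker (evA k).toRingHom = Ideal.span {(X 0 : MvPolynomial (Fin 3) k), X 2} := by
  apply le_antisymm
  · intro p hp
    rw [RingHom.mem_ker] at hp
    have h0 : Polynomial.toLaurent (αA k p) = 0 := by
      have h := congrArg (fun (f : MvPolynomial (Fin 3) k →ₐ[k] LaurentPolynomial k) => f p)
        (toLaurent_comp_alpha k)
      simp only [AlgHom.comp_apply, Polynomial.toLaurentAlg_apply] at h
      rw [h]; exact hp
    have hα : αA k p = 0 := Polynomial.toLaurent_injective (h0.trans (map_zero _).symm)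
    have hσ : σA k p = 0 := by
      have h := congrArg (fun (f : MvPolynomial (Fin 3) k →ₐ[k] MvPolynomial (Fin 3) k) => f p)
        (beta_comp_alpha_eq_sigma k)
      simp only [AlgHom.comp_apply] at h
      rw [← h, hα, map_zero]
    have := sub_sigma_mem k p
    rwa [hσ, sub_zero] at this
  · rw [Ideal.span_le]
    rintro x (rfl | rfl) <;> simp [RingHom.mem_ker, evA]


/-- the induced map on the localization. -/
def ψ : Localization.Away (X 1 : MvPolynomial (Fin 3) k) →+* LaurentPolynomial k :=
  IsLocalization.Away.lift (g := (evA k).toRingHom) (X 1)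
    (by simpa [evA] using LaurentPolynomial.isUnit_T (R := k) 1)

@[simp] lemma psi_alg (p : MvPolynomial (Fin 3) k) :
    ψ k (algebraMap _ _ p) = evA k p :=
  IsLocalization.Away.lift_eq _ _ _

lemma ker_psi : RingHom.ker (ψ k) =
    Ideal.map (algebraMap (MvPolynomial (Fin 3) k) (Localization.Away (X 1 : MvPolynomial (Fin 3) k)))
      (Ideal.span {(X 0 : MvPolynomial (Fin 3) k), X 2}) := by
  apply le_antisymm
  · intro x hx
    rw [RingHom.mem_ker] at hx
    obtain ⟨⟨r, s⟩, h⟩ := IsLocalization.surj (Submonoid.powers (X 1 : MvPolynomial (Fin 3) k)) x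
    have hr : r ∈ Ideal.span {(X 0 : MvPolynomial (Fin 3) k), X 2} := by
      rw [← ker_evA, RingHom.mem_ker]
      have : ψ k (algebraMap _ _ r) = 0 := by rw [← h, map_mul, hx, zero_mul]
      simpa using this
    obtain ⟨v, hv⟩ := (IsLocalization.map_units (Localization.Away (X 1 : MvPolynomial (Fin 3) k)) s).exists_right_inv
    have hx' : x = algebraMap _ _ r * v := by
      calc x = x * (algebraMap _ _ (s : MvPolynomial (Fin 3) k) * v) := by rw [hv, mul_one]
        _ = (x * algebraMap _ _ (s : MvPolynomial (Fin 3) k)) * v := by ring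
        _ = algebraMap _ _ r * v := by rw [h]
    rw [hx']
    exact Ideal.mul_mem_right _ _ (Ideal.mem_map_of_mem _ hr)
  · rw [Ideal.map_le_iff_le_comap, Ideal.span_le]
    rintro x (rfl | rfl) <;> simp [RingHom.mem_ker, evA]

def inv1 : Localization.Away (X 1 : MvPolynomial (Fin 3) k) :=
  IsLocalization.Away.invSelf (S := Localization.Away (X 1 : MvPolynomial (Fin 3) k))
    (X 1 : MvPolynomial (Fin 3) k)

lemma mul_inv1 : algebraMap _ _ (X 1 : MvPolynomial (Fin 3) k) * inv1 k = 1 :=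
  IsLocalization.Away.mul_invSelf (S := Localization.Away (X 1 : MvPolynomial (Fin 3) k))
    (X 1 : MvPolynomial (Fin 3) k)

lemma psi_inv1 : ψ k (inv1 k) = LaurentPolynomial.T (-1) := by
  have h1 : ψ k (algebraMap _ _ (X 1 : MvPolynomial (Fin 3) k) * inv1 k) = 1 := by
    rw [mul_inv1]; simp
  rw [map_mul, psi_alg] at h1
  have hev : evA k (X 1 : MvPolynomial (Fin 3) k) = LaurentPolynomial.T 1 := by simp [evA]
  rw [hev] at h1
  have h2 : LaurentPolynomial.T (R := k) 1 * LaurentPolynomial.T (-1) = 1 := by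
    rw [← LaurentPolynomial.T_add]; simp
  calc ψ k (inv1 k)
      = ψ k (inv1 k) * (LaurentPolynomial.T 1 * LaurentPolynomial.T (-1)) := by rw [h2, mul_one]
    _ = (LaurentPolynomial.T 1 * ψ k (inv1 k)) * LaurentPolynomial.T (-1) := by ring
    _ = LaurentPolynomial.T (-1) := by rw [h1, one_mul]

lemma psi_surjective : Function.Surjective (ψ k) := by
  intro f
  obtain ⟨n, f', hf⟩ := f.exists_T_pow
  refine ⟨algebraMap _ _ (βA k f') * (inv1 k) ^ n, ?_⟩
  have hβ : evA k (βA k f') = Polynomial.toLaurent f' := by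
    have h := congrArg (fun (g : MvPolynomial (Fin 3) k →ₐ[k] LaurentPolynomial k) => g (βA k f'))
      (toLaurent_comp_alpha k)
    simp only [AlgHom.comp_apply, Polynomial.toLaurentAlg_apply] at h
    rw [← h]
    congr 1
    have h3 : (αA k).comp (βA k) = AlgHom.id k (Polynomial k) := by
      apply Polynomial.algHom_ext
      simp [αA, βA]
    calc αA k (βA k f') = ((αA k).comp (βA k)) f' := rfl
      _ = f' := by rw [h3]; rfl
  rw [map_mul, map_pow, psi_alg, hβ, psi_inv1, LaurentPolynomial.T_pow, hf,
    mul_assoc, ← LaurentPolynomial.T_add]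
  simp

lemma mem_span_C_pair {S : Type*} [CommRing S] (a b : S) (f : PowerSeries S) :
    f ∈ Ideal.span {PowerSeries.C a, PowerSeries.C b} ↔
      ∀ n, PowerSeries.coeff n f ∈ Ideal.span {a, b} := by
  constructor
  · intro hf n
    obtain ⟨g, h, rfl⟩ := Ideal.mem_span_pair.mp hf
    rw [Ideal.mem_span_pair]
    exact ⟨PowerSeries.coeff n g, PowerSeries.coeff n h, by
      simp [PowerSeries.coeff_mul_C]⟩
  · intro hc
    choose u v huv using fun n => Ideal.mem_span_pair.mp (hc n)
    rw [Ideal.mem_span_pair]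
    refine ⟨PowerSeries.mk u, PowerSeries.mk v, ?_⟩
    ext n
    simp [PowerSeries.coeff_mul_C, huv n]

lemma map_psi_surjective : Function.Surjective (PowerSeries.map (ψ k)) := by
  intro g
  refine ⟨PowerSeries.mk fun n => (psi_surjective k (PowerSeries.coeff n g)).choose, ?_⟩
  ext n
  simp [PowerSeries.coeff_map, (psi_surjective k (PowerSeries.coeff n g)).choose_spec]

end

/-- The quotient `B/PB` is isomorphic as a ring to `k[x,1/x][[y]]`. -/
theorem statement4 (k : Type*) [Field k] :
    Nonempty ((B k ⧸ (P k).map (φ k)) ≃+* PowerSeries (LaurentPolynomial k)) := by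
  have hspan : Ideal.span
      {algebraMap (MvPolynomial (Fin 3) k)
        (Localization.Away (X 1 : MvPolynomial (Fin 3) k)) (X 0 : MvPolynomial (Fin 3) k),
       algebraMap _ _ (X 2 : MvPolynomial (Fin 3) k)} = RingHom.ker (ψ k) := by
    rw [ker_psi, Ideal.map_span, Set.image_pair]
  have hker : (P k).map (φ k) = RingHom.ker (PowerSeries.map (ψ k)) := by
    have hmap : (P k).map (φ k) = Ideal.span
        {PowerSeries.C (algebraMap _
            (Localization.Away (X 1 : MvPolynomial (Fin 3) k)) (X 0 : MvPolynomial (Fin 3) k)),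
         PowerSeries.C (algebraMap _ _ (X 2 : MvPolynomial (Fin 3) k))} := by
      rw [P, Ideal.map_span, Set.image_pair]
      simp [φ, PowerSeries.map_C]
    rw [hmap]
    ext f
    rw [mem_span_C_pair, RingHom.mem_ker]
    rw [show (PowerSeries.map (ψ k) f = 0) ↔
        ∀ n, ψ k (PowerSeries.coeff n f) = 0 from
      ⟨fun h n => by have := congrArg (PowerSeries.coeff n) h; simpa using this,
       fun h => PowerSeries.ext fun n => by simpa using h n⟩]
    refine forall_congr' fun n => ?_
    rw [← RingHom.mem_ker, ← hspan]
  exact ⟨(Ideal.quotEquivOfEq hker).trans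
    (RingHom.quotientKerEquivOfSurjective (map_psi_surjective k))⟩
end

section
/- Let k be a field, A := k[w,x,z][[y]], B := k[w,x,1/x,z][[y]], φ : A → B the coefficientwise localization map, P the prime ideal of A generated by the constant power series w and z, and S := B_{PB} where PB = P.map φ. The residue field of the local ring S is isomorphic as a field to the fraction field of k[x,1/x][[y]], the power series ring in y over the Laurent polynomial ring k[x,1/x]. -/
namespace Statement9Aux

open MvPolynomial LaurentPolynomial

/-! ### Residue field of a localization at a prime is the fraction field of the quotient -/

section ResField

variable {R : Type*} [CommRing R] (p : Ideal R) [p.IsPrime]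

/-- The natural map `R ⧸ p → ResidueField (R_p)`. -/
noncomputable def resHom : R ⧸ p →+* IsLocalRing.ResidueField (Localization.AtPrime p) :=
  Ideal.Quotient.lift p ((IsLocalRing.residue (Localization.AtPrime p)).comp
    (algebraMap R (Localization.AtPrime p))) (fun a ha => by
      have h : algebraMap R (Localization.AtPrime p) a ∈
          IsLocalRing.maximalIdeal (Localization.AtPrime p) :=
        (IsLocalization.AtPrime.to_map_mem_maximal_iff _ p a).mpr ha
      exact Ideal.Quotient.eq_zero_iff_mem.mpr h)

lemma resHom_mk (a : R) : resHom p (Ideal.Quotient.mk p a) =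
    IsLocalRing.residue _ (algebraMap R (Localization.AtPrime p) a) := rfl

lemma resHom_injective : Function.Injective (resHom p) := by
  rw [injective_iff_map_eq_zero]
  intro a ha
  obtain ⟨a, rfl⟩ := Ideal.Quotient.mk_surjective a
  rw [resHom_mk] at ha
  rw [Ideal.Quotient.eq_zero_iff_mem]
  exact (IsLocalization.AtPrime.to_map_mem_maximal_iff _ p a).mp
    (Ideal.Quotient.eq_zero_iff_mem.mp ha)

theorem isFractionRing_res :
    @IsFractionRing (R ⧸ p) _ (IsLocalRing.ResidueField (Localization.AtPrime p)) _
      (resHom p).toAlgebra := by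
  letI : Algebra (R ⧸ p) (IsLocalRing.ResidueField (Localization.AtPrime p)) :=
    (resHom p).toAlgebra
  have halg : (algebraMap (R ⧸ p) (IsLocalRing.ResidueField (Localization.AtPrime p))) =
      resHom p := rfl
  constructor
  constructor
  · intro y
    rw [halg, isUnit_iff_ne_zero]
    intro h0
    exact nonZeroDivisors.ne_zero y.2 (resHom_injective p (by simpa using h0))
  · intro z
    obtain ⟨w, rfl⟩ := IsLocalRing.residue_surjective z
    obtain ⟨r, s, rfl⟩ := IsLocalization.exists_mk'_eq p.primeCompl w
    have hs : (Ideal.Quotient.mk p s.1) ∈ nonZeroDivisors (R ⧸ p) := by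
      refine mem_nonZeroDivisors_of_ne_zero ?_
      rw [Ne, Ideal.Quotient.eq_zero_iff_mem]
      exact s.2
    refine ⟨(Ideal.Quotient.mk p r, ⟨Ideal.Quotient.mk p s.1, hs⟩), ?_⟩
    rw [halg]
    show _ * resHom p (Ideal.Quotient.mk p s.1) = resHom p (Ideal.Quotient.mk p r)
    rw [resHom_mk, resHom_mk, ← map_mul, IsLocalization.mk'_spec]
  · intro x y h
    rw [halg] at h
    exact ⟨1, by rw [resHom_injective p h]⟩

end ResField

/-! ### The algebra level: `k[w,x,z]_x ⧸ (w,z) ≅ k[x,1/x]` -/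

variable (k : Type*) [Field k]

/-- Evaluation `w ↦ 0, x ↦ T 1, z ↦ 0` into Laurent polynomials. -/
noncomputable def f : MvPolynomial (Fin 3) k →ₐ[k] LaurentPolynomial k :=
  aeval (fun i => if i = 1 then T 1 else 0)

/-- Evaluation `w ↦ 0, x ↦ X, z ↦ 0` into polynomials. -/
noncomputable def t : MvPolynomial (Fin 3) k →ₐ[k] Polynomial k :=
  aeval (fun i => if i = 1 then Polynomial.X else 0)

/-- The section `X ↦ x`. -/
noncomputable def s : Polynomial k →ₐ[k] MvPolynomial (Fin 3) k :=
  Polynomial.aeval (X 1)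

lemma f_eq : (f k) = (Polynomial.toLaurentAlg).comp (t k) := by
  apply MvPolynomial.algHom_ext
  intro i
  fin_cases i <;> simp [f, t]

lemma t_s (q : Polynomial k) : t k (s k q) = q := by
  have : (t k).comp (s k) = AlgHom.id k (Polynomial k) := by
    apply Polynomial.algHom_ext
    simp [s, t]
  calc t k (s k q) = ((t k).comp (s k)) q := rfl
  _ = q := by rw [this]; rfl

lemma sub_mem (q : MvPolynomial (Fin 3) k) :
    q - s k (t k q) ∈ Ideal.span {(X 0 : MvPolynomial (Fin 3) k), X 2} := by
  induction q using MvPolynomial.induction_on with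
  | C a =>
      have h1 : s k (t k (MvPolynomial.C a)) = MvPolynomial.C a := by simp [s, t]
      rw [h1, sub_self]
      exact zero_mem _
  | add q r hq hr =>
      have : q + r - s k (t k (q + r)) = (q - s k (t k q)) + (r - s k (t k r)) := by
        rw [map_add, map_add]; ring
      rw [this]
      exact add_mem hq hr
  | mul_X q i hq =>
      rw [map_mul, map_mul]
      by_cases hi : i = 1
      · subst hi
        have h1 : s k (t k (X 1 : MvPolynomial (Fin 3) k)) = X 1 := by simp [s, t]
        rw [h1]
        have h2 : q * X 1 - s k (t k q) * X 1 = (q - s k (t k q)) * X 1 := by ring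
        rw [h2]
        exact Ideal.mul_mem_right _ _ hq
      · have h0 : t k (X i : MvPolynomial (Fin 3) k) = 0 := by simp [t, hi]
        rw [h0, map_zero, mul_zero, sub_zero]
        refine Ideal.mul_mem_left _ _ (Ideal.subset_span ?_)
        have h02 : i = 0 ∨ i = 2 := by revert hi; fin_cases i <;> decide
        rcases h02 with rfl | rfl
        · exact Set.mem_insert _ _
        · exact Set.mem_insert_of_mem _ rfl

lemma ker_f : RingHom.ker (f k).toRingHom =
    Ideal.span {(X 0 : MvPolynomial (Fin 3) k), X 2} := by
  apply le_antisymm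
  · intro q hq
    have h0 : Polynomial.toLaurent (t k q) = 0 := by
      have := congrArg (fun F : MvPolynomial (Fin 3) k →ₐ[k] LaurentPolynomial k => F q) (f_eq k)
      simp only [AlgHom.comp_apply] at this
      rw [RingHom.mem_ker] at hq
      rw [← Polynomial.coe_toLaurentAlg, ← this]
      exact hq
    have h1 : t k q = 0 := Polynomial.toLaurent_injective h0
    have := sub_mem k q
    rwa [h1, map_zero, sub_zero] at this
  · rw [Ideal.span_le]
    rintro q (rfl | rfl) <;>
      · rw [SetLike.mem_coe, RingHom.mem_ker]
        simp [f]

lemma hu : IsUnit ((f k).toRingHom (X 1 : MvPolynomial (Fin 3) k)) := by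
  have : (f k) (X 1 : MvPolynomial (Fin 3) k) = T 1 := by simp [f]
  rw [AlgHom.toRingHom_eq_coe, RingHom.coe_coe, this]
  exact isUnit_T 1

/-- The induced map `k[w,x,z]_x → k[x,1/x]`. -/
noncomputable def g : Localization.Away (X 1 : MvPolynomial (Fin 3) k) →+* LaurentPolynomial k :=
  IsLocalization.Away.lift (X 1 : MvPolynomial (Fin 3) k) (hu k)

lemma g_alg (r : MvPolynomial (Fin 3) k) :
    g k (algebraMap (MvPolynomial (Fin 3) k) (Localization.Away (X 1 : MvPolynomial (Fin 3) k)) r) = f k r :=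
  IsLocalization.Away.lift_eq _ _ _

lemma g_invSelf : g k (IsLocalization.Away.invSelf (X 1 : MvPolynomial (Fin 3) k)) = T (-1) := by
  have h1 : (T 1 : LaurentPolynomial k) *
      g k (IsLocalization.Away.invSelf (X 1 : MvPolynomial (Fin 3) k)) = 1 := by
    have := congrArg (g k) (IsLocalization.Away.mul_invSelf
      (S := Localization.Away (X 1 : MvPolynomial (Fin 3) k)) (X 1 : MvPolynomial (Fin 3) k))
    rw [map_mul, map_one, g_alg] at this
    have hf : f k (X 1 : MvPolynomial (Fin 3) k) = T 1 := by simp [f]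
    rwa [hf] at this
  have h2 : (T (-1) : LaurentPolynomial k) * T 1 = 1 := by
    rw [← T_add]; norm_num
  calc g k (IsLocalization.Away.invSelf (X 1 : MvPolynomial (Fin 3) k))
      = (T (-1) * T 1) * g k (IsLocalization.Away.invSelf (X 1 : MvPolynomial (Fin 3) k)) := by
        rw [h2, one_mul]
    _ = T (-1) := by rw [mul_assoc, h1, mul_one]

lemma g_surj : Function.Surjective (g k) := by
  intro l
  obtain ⟨n, q, hq⟩ := exists_T_pow l
  refine ⟨algebraMap _ _ (s k q) *
    (IsLocalization.Away.invSelf (X 1 : MvPolynomial (Fin 3) k)) ^ n, ?_⟩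
  rw [map_mul, map_pow, g_alg, g_invSelf]
  have hfs : f k (s k q) = Polynomial.toLaurent q := by
    have := congrArg (fun F : MvPolynomial (Fin 3) k →ₐ[k] LaurentPolynomial k =>
      F (s k q)) (f_eq k)
    simp only [AlgHom.comp_apply] at this
    rw [this, t_s, Polynomial.coe_toLaurentAlg]
  rw [hfs, hq, T_pow, mul_T_assoc]
  norm_num

lemma ker_g : RingHom.ker (g k) = Ideal.span
    {algebraMap (MvPolynomial (Fin 3) k) (Localization.Away (X 1 : MvPolynomial (Fin 3) k)) (X 0),
     algebraMap (MvPolynomial (Fin 3) k) (Localization.Away (X 1 : MvPolynomial (Fin 3) k)) (X 2)} := by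
  apply le_antisymm
  · intro q hq
    obtain ⟨r, m, rfl⟩ := IsLocalization.exists_mk'_eq
      (Submonoid.powers (X 1 : MvPolynomial (Fin 3) k)) q
    have hfr : f k r = 0 := by
      have := congrArg (g k) (IsLocalization.mk'_spec
        (Localization.Away (X 1 : MvPolynomial (Fin 3) k)) r m)
      rw [map_mul, g_alg, g_alg] at this
      rw [RingHom.mem_ker] at hq
      rw [hq, zero_mul] at this
      exact this.symm
    have hr : r ∈ Ideal.span {(X 0 : MvPolynomial (Fin 3) k), X 2} := by
      rw [← ker_f, RingHom.mem_ker]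
      exact hfr
    have hmap : algebraMap (MvPolynomial (Fin 3) k) (Localization.Away (X 1 : MvPolynomial (Fin 3) k)) r ∈
        Ideal.span {algebraMap (MvPolynomial (Fin 3) k) (Localization.Away (X 1 : MvPolynomial (Fin 3) k)) (X 0),
          algebraMap (MvPolynomial (Fin 3) k) (Localization.Away (X 1 : MvPolynomial (Fin 3) k)) (X 2)} := by
      have := Ideal.mem_map_of_mem
        (algebraMap (MvPolynomial (Fin 3) k) (Localization.Away (X 1 : MvPolynomial (Fin 3) k))) hr
      rwa [Ideal.map_span, Set.image_insert_eq, Set.image_singleton] at this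
    rw [IsLocalization.mk'_eq_mul_mk'_one]
    exact Ideal.mul_mem_right _ _ hmap
  · rw [Ideal.span_le]
    rintro q (rfl | rfl) <;>
      · rw [SetLike.mem_coe, RingHom.mem_ker, g_alg]
        simp [f]

/-! ### The power series level -/

/-- The induced map on power series `B → k[x,1/x][[y]]`. -/
noncomputable def ψ : B k →+* PowerSeries (LaurentPolynomial k) :=
  PowerSeries.map (g k)

lemma ψ_surj : Function.Surjective (ψ k) := by
  intro h
  refine ⟨PowerSeries.mk (fun n => Classical.choose (g_surj k (PowerSeries.coeff n h))), ?_⟩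
  apply PowerSeries.ext
  intro n
  rw [ψ, PowerSeries.coeff_map, PowerSeries.coeff_mk]
  exact Classical.choose_spec (g_surj k (PowerSeries.coeff n h))

lemma ker_ψ : RingHom.ker (ψ k) = Ideal.span
    {PowerSeries.C (algebraMap (MvPolynomial (Fin 3) k) (Localization.Away (X 1 : MvPolynomial (Fin 3) k)) (X 0)),
     PowerSeries.C (algebraMap (MvPolynomial (Fin 3) k) (Localization.Away (X 1 : MvPolynomial (Fin 3) k)) (X 2))} := by
  set a' := algebraMap (MvPolynomial (Fin 3) k) (Localization.Away (X 1 : MvPolynomial (Fin 3) k)) (X 0 : MvPolynomial (Fin 3) k) with ha'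
  set b' := algebraMap (MvPolynomial (Fin 3) k) (Localization.Away (X 1 : MvPolynomial (Fin 3) k)) (X 2 : MvPolynomial (Fin 3) k) with hb'
  have hga : g k a' = 0 := by rw [ha', g_alg]; simp [f]
  have hgb : g k b' = 0 := by rw [hb', g_alg]; simp [f]
  apply le_antisymm
  · intro h hh
    rw [RingHom.mem_ker] at hh
    have hcoeff : ∀ n, ∃ u v : Localization.Away (X 1 : MvPolynomial (Fin 3) k),
        u * a' + v * b' = PowerSeries.coeff n h := by
      intro n
      rw [← Ideal.mem_span_pair]
      have : g k (PowerSeries.coeff n h) = 0 := by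
        rw [← PowerSeries.coeff_map]
        change PowerSeries.coeff n (ψ k h) = 0
        rw [hh, map_zero]
      rw [← RingHom.mem_ker, ker_g] at this
      exact this
    choose u v huv using hcoeff
    have hdecomp : h = PowerSeries.mk u * PowerSeries.C a' +
        PowerSeries.mk v * PowerSeries.C b' := by
      ext n
      rw [map_add, PowerSeries.coeff_mul_C, PowerSeries.coeff_mul_C,
        PowerSeries.coeff_mk, PowerSeries.coeff_mk, huv]
    rw [hdecomp]
    exact add_mem
      (Ideal.mul_mem_left _ _ (Ideal.subset_span (Set.mem_insert _ _)))
      (Ideal.mul_mem_left _ _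
        (Ideal.subset_span (Set.mem_insert_of_mem _ (Set.mem_singleton _))))
  · rw [Ideal.span_le]
    rintro q (rfl | rfl) <;>
      · rw [SetLike.mem_coe, RingHom.mem_ker]
        ext n
        simp [ψ, PowerSeries.coeff_map, PowerSeries.coeff_C, hga, hgb]

lemma Q_eq : (P k).map (φ k) = RingHom.ker (ψ k) := by
  have hC : ∀ r : MvPolynomial (Fin 3) k, φ k (PowerSeries.C r) =
      PowerSeries.C (algebraMap (MvPolynomial (Fin 3) k)
        (Localization.Away (X 1 : MvPolynomial (Fin 3) k)) r) := by
    intro r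
    apply PowerSeries.ext
    intro n
    simp only [φ, PowerSeries.coeff_map, PowerSeries.coeff_C]
    split <;> simp
  rw [P, Ideal.map_span, ker_ψ, Set.image_insert_eq, Set.image_singleton, hC, hC]

/-- `B ⧸ PB ≅ k[x,1/x][[y]]`. -/
noncomputable def quotEquiv : (B k ⧸ (P k).map (φ k)) ≃+* PowerSeries (LaurentPolynomial k) :=
  (Ideal.quotEquivOfEq (Q_eq k)).trans (RingHom.quotientKerEquivOfSurjective (ψ_surj k))

end Statement9Aux

/-- The residue field of `S = B_{PB}` is isomorphic to the fraction field of
`k[x,1/x][[y]]`. -/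
theorem statement9 (k : Type*) [Field k] [hPB : ((P k).map (φ k)).IsPrime] :
    Nonempty (IsLocalRing.ResidueField (Localization.AtPrime ((P k).map (φ k))) ≃+*
      FractionRing (PowerSeries (LaurentPolynomial k))) := by
  set Q := (P k).map (φ k)
  letI : Algebra (B k ⧸ Q) (IsLocalRing.ResidueField (Localization.AtPrime Q)) :=
    (Statement9Aux.resHom Q).toAlgebra
  haveI := Statement9Aux.isFractionRing_res Q
  exact ⟨IsFractionRing.ringEquivOfRingEquiv (Statement9Aux.quotEquiv k)⟩
end
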